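/- For every n ≥ 2, the number T_n of orbits of the set of n-cycles in S_n under conjugation by the rotation subgroup ⟨(1 2 ... n)⟩ equals (1/n²) · Σ_{j|n} φ(j)² · j^{n/j} · (n/j)!. -/

import Mathlib

/-- The rotation `ρ = (1 2 ⋯ n)`, i.e. the permutation `i ↦ i + 1` of `ℤ/nℤ`. -/
def rho (n : ℕ) [NeZero n] : Equiv.Perm (ZMod n) := Equiv.addRight 1

/-- The (cyclic) degree of a permutation of `ℤ/nℤ`: the number of indices `i` (mod `n`)
with `ν(i) > ν(i+1)`, values compared via the natural order on `{0, …, n-1}`. -/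
def deg {n : ℕ} [NeZero n] (ν : Equiv.Perm (ZMod n)) : ℕ :=
  (Finset.univ.filter fun i : ZMod n => (ν (i + 1)).val < (ν i).val).card

/-- `ν` is an `n`-cycle: a single cycle moving all the points. -/
def IsNCycle {n : ℕ} [NeZero n] (ν : Equiv.Perm (ZMod n)) : Prop :=
  ν.IsCycle ∧ ν.support = Finset.univ

/-- The orbit of `ν` under conjugation by the rotation subgroup `⟨ρ⟩`. -/
def rotOrbit {n : ℕ} [NeZero n] (ν : Equiv.Perm (ZMod n)) : Set (Equiv.Perm (ZMod n)) :=
  {σ | ∃ j : ℤ, σ = (rho n) ^ j * ν * ((rho n) ^ j)⁻¹}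

/-- The number of orbits of the set of `n`-cycles under conjugation by `⟨ρ⟩`. -/
noncomputable def T (n : ℕ) [NeZero n] : ℕ :=
  Nat.card {S : Set (Equiv.Perm (ZMod n)) | ∃ ν, IsNCycle ν ∧ S = rotOrbit ν}

namespace RotAux

variable {α : Type*} [Fintype α] [DecidableEq α]

/-- `σ` is transitive from basepoint `x₀`. -/
def PTrans (σ : Equiv.Perm α) (x₀ : α) : Prop := ∀ y, ∃ i : ℕ, (σ ^ i) x₀ = y

lemma fix_mul {σ : Equiv.Perm α} {x : α} {p : ℕ} (h : (σ ^ p) x = x) (t : ℕ) :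
    (σ ^ (p * t)) x = x := by
  induction t with
  | zero => simp
  | succ t ih => rw [Nat.mul_succ, pow_add, Equiv.Perm.mul_apply, h, ih]

lemma no_small_period {σ : Equiv.Perm α} {x₀ : α} (h : PTrans σ x₀) {p : ℕ}
    (hp : 0 < p) (hpd : p < Fintype.card α) : (σ ^ p) x₀ ≠ x₀ := by
  intro hfix
  have hsub : (Finset.univ : Finset α) ⊆
      Finset.image (fun t : Fin p => (σ ^ (t : ℕ)) x₀) Finset.univ := by
    intro y _
    obtain ⟨i, hi⟩ := h y
    have hh : (σ ^ i) x₀ = (σ ^ (i % p)) x₀ := by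
      conv_lhs => rw [← Nat.mod_add_div i p]
      rw [pow_add, Equiv.Perm.mul_apply, fix_mul hfix]
    refine Finset.mem_image.2 ⟨⟨i % p, Nat.mod_lt _ hp⟩, Finset.mem_univ _, ?_⟩
    rw [← hi, hh]
  have := (Finset.card_le_card hsub).trans (Finset.card_image_le)
  simp only [Finset.card_univ, Fintype.card_fin] at this
  omega

lemma ptrans_bij {σ : Equiv.Perm α} {x₀ : α} (h : PTrans σ x₀) :
    Function.Bijective (fun i : Fin (Fintype.card α) => (σ ^ (i : ℕ)) x₀) := by
  rw [Fintype.bijective_iff_injective_and_card]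
  refine ⟨?_, by simp⟩
  have key : ∀ i j : Fin (Fintype.card α), (i : ℕ) < (j : ℕ) →
      (σ ^ (i : ℕ)) x₀ = (σ ^ (j : ℕ)) x₀ → False := by
    intro i j hlt hij
    apply no_small_period h (p := (j : ℕ) - (i : ℕ)) (by omega) (by omega)
    have h2 : (σ ^ ((i : ℕ) + ((j : ℕ) - (i : ℕ)))) x₀ = (σ ^ (i : ℕ)) x₀ := by
      rw [Nat.add_sub_cancel' hlt.le, ← hij]
    rw [pow_add, Equiv.Perm.mul_apply] at h2
    exact (σ ^ (i : ℕ)).injective h2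
  intro i j hij
  dsimp only at hij
  rcases lt_trichotomy (i : ℕ) (j : ℕ) with hlt | heq | hgt
  · exact absurd hij (fun hh => key i j hlt hh)
  · exact Fin.ext heq
  · exact absurd hij.symm (fun hh => key j i hgt hh)

lemma pow_card_fix {σ : Equiv.Perm α} {x₀ : α} (h : PTrans σ x₀) :
    (σ ^ Fintype.card α) x₀ = x₀ := by
  obtain ⟨i, hi⟩ := (ptrans_bij h).2 ((σ ^ Fintype.card α) x₀)
  dsimp only at hi
  rcases Nat.eq_zero_or_pos (i : ℕ) with h0 | h0
  · rw [h0, pow_zero] at hi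
    simpa using hi.symm
  · exfalso
    apply no_small_period h (p := Fintype.card α - (i : ℕ)) (by omega) (by omega)
    have h2 : (σ ^ ((i : ℕ) + (Fintype.card α - (i : ℕ)))) x₀ = (σ ^ (i : ℕ)) x₀ := by
      rw [Nat.add_sub_cancel' i.2.le, ← hi]
    rw [pow_add, Equiv.Perm.mul_apply] at h2
    exact (σ ^ (i : ℕ)).injective h2

lemma pow_card_eq_one {σ : Equiv.Perm α} {x₀ : α} (h : PTrans σ x₀) :
    σ ^ (Fintype.card α) = 1 := by
  ext y
  obtain ⟨s, rfl⟩ := h y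
  rw [← Equiv.Perm.mul_apply, ← pow_add, add_comm, pow_add, Equiv.Perm.mul_apply,
    pow_card_fix h]
  simp

lemma ptrans_everywhere {σ : Equiv.Perm α} {x₀ : α} (h : PTrans σ x₀) (x : α) :
    PTrans σ x := by
  obtain ⟨t, rfl⟩ := h x
  intro y
  obtain ⟨s, rfl⟩ := h y
  refine ⟨s + t * (Fintype.card α - 1), ?_⟩
  rw [← Equiv.Perm.mul_apply, ← pow_add]
  have hcard : 0 < Fintype.card α := Fintype.card_pos_iff.2 ⟨x₀⟩
  have h2 : t * Fintype.card α = t * (Fintype.card α - 1) + t := by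
    conv_lhs => rw [← Nat.succ_pred_eq_of_pos hcard]
    rw [Nat.mul_succ, Nat.pred_eq_sub_one]
  have h3 : s + t * (Fintype.card α - 1) + t = s + Fintype.card α * t := by
    have h4 : Fintype.card α * t = t * Fintype.card α := Nat.mul_comm _ _
    omega
  rw [h3, pow_add, pow_mul, pow_card_eq_one h, one_pow, mul_one]

lemma ptrans_bij' {σ : Equiv.Perm α} {x₀ : α} (h : PTrans σ x₀) (x : α) :
    Function.Bijective (fun i : Fin (Fintype.card α) => (σ ^ (i : ℕ)) x) :=
  ptrans_bij (ptrans_everywhere h x)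


section Count

variable {α : Type*} [Fintype α] [DecidableEq α]

lemma pow_eq_of_modeq {σ : Equiv.Perm α} {x₀ : α} (h : PTrans σ x₀) {a b : ℕ}
    (hab : a ≡ b [MOD Fintype.card α]) : σ ^ a = σ ^ b := by
  have key : ∀ c : ℕ, σ ^ c = σ ^ (c % Fintype.card α) := by
    intro c
    conv_lhs => rw [← Nat.mod_add_div c (Fintype.card α)]
    rw [pow_add, pow_mul, pow_card_eq_one h, one_pow, mul_one]
  rw [key a, key b, hab]

variable (x₀ : α)

local notation "dd" => Fintype.card α

/-- The cyclic permutation associated to an enumeration. -/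
def cycOf (e : ZMod dd ≃ α) : Equiv.Perm α :=
  (e.symm.trans (Equiv.addRight (1 : ZMod dd))).trans e

lemma cycOf_pow_apply (e : ZMod dd ≃ α) (i : ℕ) (x : α) :
    ((cycOf e) ^ i) x = e (e.symm x + i) := by
  induction i with
  | zero => simp
  | succ i ih =>
    rw [pow_succ', Equiv.Perm.mul_apply, ih]
    simp only [cycOf, Equiv.trans_apply, Equiv.coe_addRight, Equiv.symm_apply_apply]
    refine congrArg e ?_
    push_cast
    ring

noncomputable def orbEquiv {σ : Equiv.Perm α} (h : PTrans σ x₀) : ZMod dd ≃ α :=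
  Equiv.ofBijective (fun z : ZMod dd => (σ ^ z.val) x₀) (by
    have : NeZero dd := ⟨(Fintype.card_pos_iff.2 ⟨x₀⟩).ne'⟩
    rw [Fintype.bijective_iff_injective_and_card]
    constructor
    · intro z w hzw
      have h2 := (ptrans_bij h).1 (a₁ := ⟨z.val, z.val_lt⟩) (a₂ := ⟨w.val, w.val_lt⟩) hzw
      have hv : z.val = w.val := congrArg Fin.val h2
      calc z = ((z.val : ℕ) : ZMod dd) := (ZMod.natCast_rightInverse z).symm
      _ = ((w.val : ℕ) : ZMod dd) := by rw [hv]
      _ = w := ZMod.natCast_rightInverse w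
    · simp [ZMod.card])

lemma orbEquiv_apply {σ : Equiv.Perm α} (h : PTrans σ x₀) (z : ZMod dd) :
    orbEquiv x₀ h z = (σ ^ z.val) x₀ := rfl

lemma cycOf_ptrans [NeZero dd] {e : ZMod dd ≃ α} (he : e 0 = x₀) :
    PTrans (cycOf e) x₀ := by
  intro y
  refine ⟨(e.symm y).val, ?_⟩
  have h0 : e.symm x₀ = 0 := by rw [Equiv.symm_apply_eq, he]
  rw [cycOf_pow_apply, h0, zero_add, ZMod.natCast_rightInverse (e.symm y),
    Equiv.apply_symm_apply]

/-- Pointed transitive permutations are equivalent to pointed enumerations. -/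
noncomputable def ptransEquiv [NeZero dd] :
    {σ : Equiv.Perm α // PTrans σ x₀} ≃ {e : ZMod dd ≃ α // e 0 = x₀} where
  toFun σ := ⟨orbEquiv x₀ σ.2, by
    rw [orbEquiv_apply, ZMod.val_zero, pow_zero]; rfl⟩
  invFun e := ⟨cycOf e.1, cycOf_ptrans x₀ e.2⟩
  left_inv := by
    rintro ⟨σ, h⟩
    apply Subtype.ext
    apply Equiv.ext
    intro x
    obtain ⟨z, hz⟩ := (orbEquiv x₀ h).surjective x
    show (cycOf (orbEquiv x₀ h)) x = σ x
    have h1 : (cycOf (orbEquiv x₀ h)) x = ((cycOf (orbEquiv x₀ h)) ^ 1) x := by rw [pow_one]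
    rw [h1, cycOf_pow_apply, ← hz, Equiv.symm_apply_apply, Nat.cast_one, orbEquiv_apply,
      orbEquiv_apply]
    rw [← Equiv.Perm.mul_apply, ← pow_succ']
    have hmod : (z + 1).val ≡ z.val + 1 [MOD dd] := by
      rw [ZMod.val_add, ZMod.val_one_eq_one_mod]
      calc (z.val + 1 % dd) % dd ≡ z.val + 1 % dd [MOD dd] := Nat.mod_modEq _ _
      _ ≡ z.val + 1 [MOD dd] := Nat.ModEq.add_left _ (Nat.mod_modEq _ _)
    rw [pow_eq_of_modeq h hmod]
  right_inv := by
    rintro ⟨e, he⟩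
    apply Subtype.ext
    apply Equiv.ext
    intro z
    show orbEquiv x₀ (cycOf_ptrans x₀ he) z = e z
    rw [orbEquiv_apply, cycOf_pow_apply]
    have h0 : e.symm x₀ = 0 := by rw [Equiv.symm_apply_eq, he]
    rw [h0, zero_add, ZMod.natCast_rightInverse z]

/-- Pointed enumerations correspond to equivalences of punctured types. -/
noncomputable def pointedEnumEquiv [NeZero dd] :
    {e : ZMod dd ≃ α // e 0 = x₀} ≃ ({b : ZMod dd // b ≠ 0} ≃ {y : α // y ≠ x₀}) := by
  refine Equiv.trans ?_ (Equiv.optionSubtype x₀)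
  exact {
    toFun := fun e => ⟨(Equiv.optionSubtypeNe (0 : ZMod dd)).trans e.1, by
      simp [e.2]⟩
    invFun := fun e => ⟨(Equiv.optionSubtypeNe (0 : ZMod dd)).symm.trans e.1, by
      have h1 : (Equiv.optionSubtypeNe (0 : ZMod dd)).symm 0 = none := by simp
      simp [h1, e.2]⟩
    left_inv := fun e => by
      apply Subtype.ext; apply Equiv.ext; intro x
      by_cases hx : x = 0 <;> simp [hx, e.2]
    right_inv := fun e => by
      apply Subtype.ext; apply Equiv.ext; intro x
      cases x with
      | none => simp
      | some b => simp [b.2] }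

lemma card_ne_point : Fintype.card {y : α // y ≠ x₀} = Fintype.card α - 1 := by
  have := Fintype.card_subtype_compl (fun y : α => y = x₀)
  simpa [Fintype.card_subtype_eq] using this

/-- The number of pointed transitive permutations is `(card α - 1)!`. -/
lemma card_ptrans : Nat.card {σ : Equiv.Perm α // PTrans σ x₀} =
    (Fintype.card α - 1).factorial := by
  have : NeZero dd := ⟨(Fintype.card_pos_iff.2 ⟨x₀⟩).ne'⟩
  rw [Nat.card_congr ((ptransEquiv x₀).trans (pointedEnumEquiv x₀))]
  rw [Nat.card_eq_fintype_card]
  have hc : Fintype.card {b : ZMod dd // b ≠ (0 : ZMod dd)} = Fintype.card {y : α // y ≠ x₀} := by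
    rw [card_ne_point, card_ne_point x₀, ZMod.card]
  rw [Fintype.card_equiv (Fintype.equivOfCardEq hc), card_ne_point, ZMod.card]

end Count

section Product

variable (m d : ℕ) [NeZero m] [NeZero d]

def shift : Equiv.Perm (ZMod m × ZMod d) :=
  (Equiv.addRight (1 : ZMod m)).prodCongr (Equiv.refl (ZMod d))

variable {m d}

lemma shift_apply (p : ZMod m × ZMod d) : shift m d p = (p.1 + 1, p.2) := rfl

lemma shift_pow (k : ℕ) (p : ZMod m × ZMod d) :
    ((shift m d) ^ k) p = (p.1 + (k : ZMod m), p.2) := by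
  induction k with
  | zero => simp
  | succ k ih =>
    rw [pow_succ', Equiv.Perm.mul_apply, ih, shift_apply]
    refine Prod.ext_iff.2 ⟨?_, rfl⟩
    push_cast
    ring

def build (π : Equiv.Perm (ZMod d)) (a : ZMod d → ZMod m) : Equiv.Perm (ZMod m × ZMod d) where
  toFun p := (p.1 + a p.2, π p.2)
  invFun p := (p.1 - a (π.symm p.2), π.symm p.2)
  left_inv p := by simp
  right_inv p := by simp

lemma build_apply (π : Equiv.Perm (ZMod d)) (a : ZMod d → ZMod m) (q : ZMod m) (r : ZMod d) :
    build π a (q, r) = (q + a r, π r) := rfl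

lemma build_pow (π : Equiv.Perm (ZMod d)) (a : ZMod d → ZMod m) (i : ℕ) (q : ZMod m)
    (r : ZMod d) :
    ((build π a) ^ i) (q, r) = (q + ∑ t ∈ Finset.range i, a ((π ^ t) r), (π ^ i) r) := by
  induction i with
  | zero => simp
  | succ i ih =>
    rw [pow_succ', Equiv.Perm.mul_apply, ih, build_apply, Finset.sum_range_succ,
      pow_succ' π, Equiv.Perm.mul_apply]
    exact Prod.ext_iff.2 ⟨by ring, rfl⟩

lemma build_commute (π : Equiv.Perm (ZMod d)) (a : ZMod d → ZMod m) :
    Commute (build π a) (shift m d) := by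
  apply Equiv.ext
  rintro ⟨q, r⟩
  show build π a (shift m d (q, r)) = shift m d (build π a (q, r))
  rw [shift_apply, build_apply, build_apply, shift_apply]
  exact Prod.ext_iff.2 ⟨by ring, rfl⟩

lemma commute_apply {ν : Equiv.Perm (ZMod m × ZMod d)} (h : Commute ν (shift m d))
    (q : ZMod m) (r : ZMod d) :
    ν (q, r) = ((ν (0, r)).1 + q, (ν (0, r)).2) := by
  have hp : ((shift m d) ^ q.val) ((0 : ZMod m), r) = (q, r) := by
    rw [shift_pow, zero_add, ZMod.natCast_rightInverse q]
  have hc : ν * (shift m d) ^ q.val = (shift m d) ^ q.val * ν := h.pow_right q.val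
  calc ν (q, r) = (ν * (shift m d) ^ q.val) (0, r) := by rw [Equiv.Perm.mul_apply, hp]
  _ = ((shift m d) ^ q.val) (ν (0, r)) := by rw [hc, Equiv.Perm.mul_apply]
  _ = ((ν (0, r)).1 + q, (ν (0, r)).2) := by
      rw [shift_pow, ZMod.natCast_rightInverse q]

lemma snd_bijective {ν : Equiv.Perm (ZMod m × ZMod d)} (h : Commute ν (shift m d)) :
    Function.Bijective (fun r : ZMod d => (ν (0, r)).2) := by
  rw [Fintype.bijective_iff_injective_and_card]
  refine ⟨?_, rfl⟩
  intro r r' hrr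
  dsimp only at hrr
  have h1 : ν ((ν ((0 : ZMod m), r')).1, r) = ν ((ν ((0 : ZMod m), r)).1, r') := by
    rw [commute_apply h ((ν ((0 : ZMod m), r')).1) r,
      commute_apply h ((ν ((0 : ZMod m), r)).1) r']
    exact Prod.ext_iff.2 ⟨add_comm _ _, hrr⟩
  exact (Prod.ext_iff.1 (ν.injective h1)).2

noncomputable def decompEquiv :
    {ν : Equiv.Perm (ZMod m × ZMod d) // Commute ν (shift m d)} ≃
      Equiv.Perm (ZMod d) × (ZMod d → ZMod m) where
  toFun ν := (Equiv.ofBijective _ (snd_bijective ν.2), fun r => (ν.1 (0, r)).1)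
  invFun pa := ⟨build pa.1 pa.2, build_commute pa.1 pa.2⟩
  left_inv := by
    rintro ⟨ν, h⟩
    apply Subtype.ext
    apply Equiv.ext
    rintro ⟨q, r⟩
    show (q + (ν (0, r)).1, (ν (0, r)).2) = ν (q, r)
    rw [commute_apply h q r]
    exact Prod.ext_iff.2 ⟨add_comm _ _, rfl⟩
  right_inv := by
    rintro ⟨π, a⟩
    refine Prod.ext_iff.2 ⟨?_, ?_⟩
    · apply Equiv.ext; intro r
      show (build π a (0, r)).2 = π r
      rfl
    · funext r
      show (build π a (0, r)).1 = a r
      exact zero_add _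

local notation "DD" => Fintype.card (ZMod d)

lemma sum_orbit {π : Equiv.Perm (ZMod d)} (a : ZMod d → ZMod m) (hπ : PTrans π 0) (r : ZMod d) :
    ∑ t ∈ Finset.range DD, a ((π ^ t) r) = ∑ x, a x := by
  rw [← Fin.sum_univ_eq_sum_range]
  exact Fintype.sum_bijective _ (ptrans_bij' hπ r) _ a (fun t => rfl)

lemma sum_step {π : Equiv.Perm (ZMod d)} (a : ZMod d → ZMod m) (hπ : PTrans π 0) (j : ℕ) :
    ∑ t ∈ Finset.range (j + DD), a ((π ^ t) 0)
      = (∑ t ∈ Finset.range j, a ((π ^ t) 0)) + ∑ x, a x := by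
  rw [Finset.sum_range_add]
  congr 1
  calc ∑ t ∈ Finset.range DD, a ((π ^ (j + t)) 0)
      = ∑ t ∈ Finset.range DD, a ((π ^ t) ((π ^ j) 0)) := by
        refine Finset.sum_congr rfl fun t _ => ?_
        rw [add_comm, pow_add, Equiv.Perm.mul_apply]
  _ = ∑ x, a x := sum_orbit a hπ _

lemma sum_full {π : Equiv.Perm (ZMod d)} (a : ZMod d → ZMod m) (hπ : PTrans π 0) (i t : ℕ) :
    ∑ u ∈ Finset.range (i + DD * t), a ((π ^ u) 0)
      = (∑ u ∈ Finset.range i, a ((π ^ u) 0)) + (t : ZMod m) * (∑ x, a x) := by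
  induction t with
  | zero => simp
  | succ t ih =>
    have harith : i + DD * (t + 1) = (i + DD * t) + DD := by ring
    rw [harith, sum_step a hπ, ih]
    push_cast
    ring

lemma build_ptrans_iff {π : Equiv.Perm (ZMod d)} {a : ZMod d → ZMod m} :
    PTrans (build π a) ((0 : ZMod m), (0 : ZMod d)) ↔ PTrans π 0 ∧ IsUnit (∑ x, a x) := by
  constructor
  · intro H
    have hπ : PTrans π 0 := by
      intro r
      obtain ⟨j, hj⟩ := H (0, r)
      rw [build_pow] at hj
      exact ⟨j, (Prod.ext_iff.1 hj).2⟩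
    refine ⟨hπ, ?_⟩
    obtain ⟨j, hj⟩ := H (1, 0)
    rw [build_pow] at hj
    obtain ⟨h1, h2⟩ := Prod.ext_iff.1 hj
    have hmodeq : π ^ j = π ^ (j % DD) := pow_eq_of_modeq hπ (Nat.mod_modEq j DD).symm
    have he : (π ^ (j % DD)) 0 = (π ^ 0) 0 := by
      rw [← hmodeq]
      rw [pow_zero]
      exact h2.trans (by simp)
    have hfin := (ptrans_bij hπ).1 (a₁ := ⟨j % DD, Nat.mod_lt _ Fintype.card_pos⟩)
      (a₂ := ⟨0, Fintype.card_pos⟩) he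
    have hjD : j % DD = 0 := congrArg Fin.val hfin
    obtain ⟨t, rfl⟩ := Nat.dvd_of_mod_eq_zero hjD
    have hs := sum_full a hπ 0 t
    simp only [Nat.zero_add, zero_add, Finset.range_zero, Finset.sum_empty] at hs h1
    rw [hs] at h1
    exact IsUnit.of_mul_eq_one _ (by rw [mul_comm]; exact h1)
  · rintro ⟨hπ, hu⟩
    rintro ⟨q, r⟩
    obtain ⟨i, hi⟩ := hπ r
    obtain ⟨u, hu'⟩ := hu
    refine ⟨i + DD * ((q - ∑ v ∈ Finset.range i, a ((π ^ v) 0)) * ↑u⁻¹).val, ?_⟩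
    rw [build_pow, sum_full a hπ]
    refine Prod.ext_iff.2 ⟨?_, ?_⟩
    · rw [zero_add, ZMod.natCast_rightInverse, ← hu', Units.inv_mul_cancel_right]
      ring
    · rw [pow_add, Equiv.Perm.mul_apply, fix_mul (pow_card_fix hπ), hi]

end Product

section ProductCount

variable {m d : ℕ} [NeZero m] [NeZero d]

noncomputable def unitsSubtypeEquiv (m : ℕ) [NeZero m] :
    {c : ZMod m // IsUnit c} ≃ (ZMod m)ˣ where
  toFun c := c.2.unit
  invFun u := ⟨u, u.isUnit⟩
  left_inv c := Subtype.ext c.2.unit_spec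
  right_inv u := Units.ext (IsUnit.unit_spec _)

lemma sum_split (f : ZMod d → ZMod m) :
    ∑ r, f r = f 0 + ∑ s : {r : ZMod d // r ≠ (0 : ZMod d)}, f s.1 := by
  rw [← Finset.sum_subtype ((Finset.univ : Finset (ZMod d)).erase 0)
    (fun x => by simp [Finset.mem_erase]) f]
  exact (Finset.add_sum_erase _ f (Finset.mem_univ 0)).symm

def glue (c : ZMod m) (b : {r : ZMod d // r ≠ (0 : ZMod d)} → ZMod m) : ZMod d → ZMod m :=
  fun r => if h : r = 0 then c - ∑ s, b s else b ⟨r, h⟩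

lemma glue_ne (c : ZMod m) (b : {r : ZMod d // r ≠ (0 : ZMod d)} → ZMod m)
    (s : {r : ZMod d // r ≠ (0 : ZMod d)}) : glue c b s.1 = b s := by
  rw [glue, dif_neg s.2]

lemma glue_sum (c : ZMod m) (b : {r : ZMod d // r ≠ (0 : ZMod d)} → ZMod m) :
    ∑ r, glue c b r = c := by
  rw [sum_split, Finset.sum_congr rfl (fun s _ => glue_ne c b s)]
  have h1 : glue c b 0 = c - ∑ s, b s := dif_pos rfl
  rw [h1]
  ring

noncomputable def sumUnitEquiv :
    {a : ZMod d → ZMod m // IsUnit (∑ x, a x)} ≃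
      {c : ZMod m // IsUnit c} × ({r : ZMod d // r ≠ (0 : ZMod d)} → ZMod m) where
  toFun a := (⟨∑ x, a.1 x, a.2⟩, fun s => a.1 s.1)
  invFun cb := ⟨glue cb.1.1 cb.2, by rw [glue_sum]; exact cb.1.2⟩
  left_inv := by
    rintro ⟨a, ha⟩
    apply Subtype.ext
    funext r
    show glue (∑ x, a x) (fun s => a s.1) r = a r
    by_cases hr : r = 0
    · subst hr
      have h1 : glue (∑ x, a x) (fun s => a s.1) (0 : ZMod d)
          = (∑ x, a x) - ∑ s : {r : ZMod d // r ≠ (0 : ZMod d)}, a s.1 := dif_pos rfl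
      rw [h1, sum_split a]
      ring
    · exact glue_ne _ _ ⟨r, hr⟩
  right_inv := by
    rintro ⟨c, b⟩
    refine Prod.ext_iff.2 ⟨Subtype.ext ?_, funext fun s => ?_⟩
    · exact glue_sum _ _
    · exact glue_ne _ _ s

lemma card_sum_unit :
    Nat.card {a : ZMod d → ZMod m // IsUnit (∑ x, a x)} = m.totient * m ^ (d - 1) := by
  rw [Nat.card_congr sumUnitEquiv, Nat.card_prod, Nat.card_congr (unitsSubtypeEquiv m),
    Nat.card_eq_fintype_card, ZMod.card_units_eq_totient, Nat.card_fun, Nat.card_zmod,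
    Nat.card_eq_fintype_card, card_ne_point, ZMod.card]

/-- The main product-side count. -/
lemma card_main :
    Nat.card {ν : Equiv.Perm (ZMod m × ZMod d) //
        Commute ν (shift m d) ∧ PTrans ν ((0 : ZMod m), (0 : ZMod d))} =
      m.totient * m ^ (d - 1) * (d - 1).factorial := by
  have E1 := (Equiv.subtypeSubtypeEquivSubtypeInter
    (fun ν : Equiv.Perm (ZMod m × ZMod d) => Commute ν (shift m d))
    (fun ν => PTrans ν ((0 : ZMod m), (0 : ZMod d)))).symm
  have E2 : {x : {ν : Equiv.Perm (ZMod m × ZMod d) // Commute ν (shift m d)} //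
      PTrans x.1 ((0 : ZMod m), (0 : ZMod d))} ≃
      {pa : Equiv.Perm (ZMod d) × (ZMod d → ZMod m) //
        PTrans pa.1 0 ∧ IsUnit (∑ x, pa.2 x)} := by
    refine decompEquiv.subtypeEquiv fun x => ?_
    have hx : x.1 = build (decompEquiv x).1 (decompEquiv x).2 := by
      have h2 := decompEquiv.symm_apply_apply x
      exact congrArg Subtype.val h2.symm
    rw [hx]
    exact build_ptrans_iff
  have E3 := Equiv.subtypeProdEquivProd
    (p := fun π : Equiv.Perm (ZMod d) => PTrans π 0)
    (q := fun a : ZMod d → ZMod m => IsUnit (∑ x, a x))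
  rw [Nat.card_congr ((E1.trans E2).trans E3), Nat.card_prod, card_ptrans, card_sum_unit,
    ZMod.card]
  ring

end ProductCount

section Transfer

variable {n d m : ℕ} [NeZero n] [NeZero d] [NeZero m]

lemma zval_inj {k : ℕ} [NeZero k] {a b : ZMod k} (h : a.val = b.val) : a = b := by
  calc a = ((a.val : ℕ) : ZMod k) := (ZMod.natCast_rightInverse a).symm
  _ = ((b.val : ℕ) : ZMod k) := by rw [h]
  _ = b := ZMod.natCast_rightInverse b

lemma cast_dmul_mod (hdm : n = d * m) (x : ℕ) :
    ((d * (x % m) : ℕ) : ZMod n) = ((d * x : ℕ) : ZMod n) := by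
  have h0 : ((d : ZMod n) * (m : ZMod n)) = 0 := by
    rw [← Nat.cast_mul, ← hdm, ZMod.natCast_self]
  conv_rhs => rw [← Nat.div_add_mod x m]
  push_cast
  linear_combination (-((x / m : ℕ) : ZMod n)) * h0

lemma psi_lt (hdm : n = d * m) (p : ZMod m × ZMod d) : d * p.1.val + p.2.val < n := by
  have h1 := p.1.val_lt
  have h2 := p.2.val_lt
  calc d * p.1.val + p.2.val < d * p.1.val + d := by omega
  _ = d * (p.1.val + 1) := by ring
  _ ≤ d * m := Nat.mul_le_mul_left d h1
  _ = n := hdm.symm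

noncomputable def psiEquiv (hdm : n = d * m) : ZMod m × ZMod d ≃ ZMod n := by
  refine Equiv.ofBijective (fun p => ((d * p.1.val + p.2.val : ℕ) : ZMod n)) ?_
  rw [Fintype.bijective_iff_injective_and_card]
  constructor
  · intro p p' h
    have h1 := congrArg ZMod.val h
    rw [ZMod.val_cast_of_lt (psi_lt hdm p), ZMod.val_cast_of_lt (psi_lt hdm p')] at h1
    have hr : p.2.val = p'.2.val := by
      have e1 : (d * p.1.val + p.2.val) % d = p.2.val := by
        rw [Nat.mul_add_mod, Nat.mod_eq_of_lt p.2.val_lt]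
      have e2 : (d * p'.1.val + p'.2.val) % d = p'.2.val := by
        rw [Nat.mul_add_mod, Nat.mod_eq_of_lt p'.2.val_lt]
      rw [← e1, ← e2, h1]
    have hq : p.1.val = p'.1.val := by
      have hd : 0 < d := Nat.pos_of_ne_zero (NeZero.ne d)
      have : d * p.1.val = d * p'.1.val := by omega
      exact Nat.eq_of_mul_eq_mul_left hd this
    exact Prod.ext_iff.2 ⟨zval_inj hq, zval_inj hr⟩
  · rw [Fintype.card_prod, ZMod.card, ZMod.card, ZMod.card, hdm, Nat.mul_comm]

lemma psiEquiv_apply (hdm : n = d * m) (p : ZMod m × ZMod d) :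
    psiEquiv hdm p = ((d * p.1.val + p.2.val : ℕ) : ZMod n) := rfl

lemma psi_zero (hdm : n = d * m) : psiEquiv hdm (0, 0) = 0 := by
  rw [psiEquiv_apply]
  simp [ZMod.val_zero]

lemma addRight_pow (k : ℕ) (x : ZMod n) :
    ((Equiv.addRight (1 : ZMod n)) ^ k) x = x + k := by
  induction k with
  | zero => simp
  | succ k ih =>
    rw [pow_succ', Equiv.Perm.mul_apply, ih, Equiv.coe_addRight]
    push_cast
    ring

lemma psi_shift (hdm : n = d * m) (p : ZMod m × ZMod d) :
    psiEquiv hdm (shift m d p) = psiEquiv hdm p + d := by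
  obtain ⟨q, r⟩ := p
  rw [shift_apply, psiEquiv_apply, psiEquiv_apply]
  show ((d * (q + 1).val + r.val : ℕ) : ZMod n) = ((d * q.val + r.val : ℕ) : ZMod n) + d
  rw [ZMod.val_add, ZMod.val_one_eq_one_mod]
  calc ((d * ((q.val + 1 % m) % m) + r.val : ℕ) : ZMod n)
      = ((d * ((q.val + 1 % m) % m) : ℕ) : ZMod n) + ((r.val : ℕ) : ZMod n) := by
        push_cast; ring
  _ = ((d * (q.val + 1 % m) : ℕ) : ZMod n) + ((r.val : ℕ) : ZMod n) := by
        rw [cast_dmul_mod hdm]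
  _ = ((d * q.val : ℕ) : ZMod n) + ((d * (1 % m) : ℕ) : ZMod n) + ((r.val : ℕ) : ZMod n) := by
        push_cast; ring
  _ = ((d * q.val : ℕ) : ZMod n) + ((d * 1 : ℕ) : ZMod n) + ((r.val : ℕ) : ZMod n) := by
        rw [cast_dmul_mod hdm 1]
  _ = ((d * q.val + r.val : ℕ) : ZMod n) + (d : ZMod n) := by push_cast; ring

section PermCongr

variable {β γ : Type*}

lemma permCongr_mul (e : β ≃ γ) (ν μ : Equiv.Perm β) :
    e.permCongr (ν * μ) = e.permCongr ν * e.permCongr μ := by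
  apply Equiv.ext; intro x
  simp [Equiv.permCongr_apply, Equiv.Perm.mul_apply]

lemma permCongr_commute_iff (e : β ≃ γ) {ν s : Equiv.Perm β} :
    Commute (e.permCongr ν) (e.permCongr s) ↔ Commute ν s := by
  constructor
  · intro h
    have := h
    rw [Commute, SemiconjBy, ← permCongr_mul, ← permCongr_mul] at this
    exact e.permCongr.injective this
  · intro h
    rw [Commute, SemiconjBy, ← permCongr_mul, ← permCongr_mul, h]

lemma permCongr_pow (e : β ≃ γ) (ν : Equiv.Perm β) (i : ℕ) :
    (e.permCongr ν) ^ i = e.permCongr (ν ^ i) := by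
  induction i with
  | zero =>
    apply Equiv.ext; intro x
    simp [Equiv.permCongr_apply]
  | succ i ih => rw [pow_succ, pow_succ, ih, permCongr_mul]

lemma permCongr_ptrans_iff [Fintype β] [Fintype γ] [DecidableEq β] [DecidableEq γ]
    (e : β ≃ γ) (ν : Equiv.Perm β) (x₀ : β) :
    PTrans (e.permCongr ν) (e x₀) ↔ PTrans ν x₀ := by
  have key : ∀ i : ℕ, ((e.permCongr ν) ^ i) (e x₀) = e ((ν ^ i) x₀) := by
    intro i
    rw [permCongr_pow, Equiv.permCongr_apply, Equiv.symm_apply_apply]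
  constructor
  · intro h y
    obtain ⟨i, hi⟩ := h (e y)
    rw [key] at hi
    exact ⟨i, e.injective hi⟩
  · intro h y
    obtain ⟨i, hi⟩ := h (e.symm y)
    refine ⟨i, ?_⟩
    rw [key, hi, Equiv.apply_symm_apply]

end PermCongr

lemma psi_conj_shift (hdm : n = d * m) :
    (psiEquiv hdm).permCongr (shift m d) = (Equiv.addRight (1 : ZMod n)) ^ d := by
  apply Equiv.ext; intro x
  rw [Equiv.permCongr_apply, addRight_pow, psi_shift hdm, Equiv.apply_symm_apply]

lemma card_fix_zmod (hdm : n = d * m) :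
    Nat.card {ν : Equiv.Perm (ZMod n) //
        Commute ν ((Equiv.addRight (1 : ZMod n)) ^ d) ∧ PTrans ν 0}
      = m.totient * m ^ (d - 1) * (d - 1).factorial := by
  rw [← card_main (m := m) (d := d)]
  symm
  apply Nat.card_congr
  refine Equiv.subtypeEquiv ((psiEquiv hdm).permCongr) fun ν => ?_
  constructor
  · rintro ⟨h1, h2⟩
    refine ⟨?_, ?_⟩
    · rw [← psi_conj_shift hdm]
      exact (permCongr_commute_iff (psiEquiv hdm)).2 h1
    · rw [← psi_zero hdm]
      exact (permCongr_ptrans_iff (psiEquiv hdm) ν (0, 0)).2 h2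
  · rintro ⟨h1, h2⟩
    refine ⟨?_, ?_⟩
    · rw [← psi_conj_shift hdm] at h1
      exact (permCongr_commute_iff (psiEquiv hdm)).1 h1
    · rw [← psi_zero hdm] at h2
      exact (permCongr_ptrans_iff (psiEquiv hdm) ν (0, 0)).1 h2

lemma ncycle_iff_ptrans {k : ℕ} [NeZero k] (hk : 2 ≤ k) (ν : Equiv.Perm (ZMod k)) :
    (ν.IsCycle ∧ ν.support = Finset.univ) ↔ PTrans ν 0 := by
  constructor
  · rintro ⟨hc, hs⟩ y
    have h0 : ν 0 ≠ 0 := by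
      rw [← Equiv.Perm.mem_support, hs]; exact Finset.mem_univ 0
    have hy : ν y ≠ y := by
      rw [← Equiv.Perm.mem_support, hs]; exact Finset.mem_univ y
    obtain ⟨i, _, hi⟩ := (hc.sameCycle h0 hy).exists_pow_eq'
    exact ⟨i, hi⟩
  · intro h
    have h2 : (1 : ℕ) < Fintype.card (ZMod k) := by rw [ZMod.card]; omega
    have hfix : ∀ y, ν y = y → False := by
      intro y hy
      obtain ⟨z, hz⟩ := Fintype.exists_ne_of_one_lt_card h2 y
      obtain ⟨j, hj⟩ := ptrans_everywhere h y z
      have h1' : (ν ^ 1) y = y := by simpa using hy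
      have hfj : (ν ^ (1 * j)) y = y := fix_mul h1' j
      rw [one_mul] at hfj
      exact hz (by rw [← hj, hfj])
    refine ⟨⟨0, fun h0 => hfix 0 h0, fun y hy => ?_⟩, ?_⟩
    · obtain ⟨i, hi⟩ := h y
      exact ⟨(i : ℤ), by rw [zpow_natCast]; exact hi⟩
    · rw [Finset.eq_univ_iff_forall]
      intro y
      rw [Equiv.Perm.mem_support]
      exact fun hy => hfix y hy

end Transfer

section Burnside

variable (n : ℕ) [NeZero n]

lemma rho_eq : rho n = Equiv.addRight (1 : ZMod n) := rfl

lemma rho_pow_apply (k : ℕ) (x : ZMod n) : ((rho n) ^ k) x = x + k := addRight_pow k x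

lemma rho_pow_n : (rho n) ^ n = 1 := by
  apply Equiv.ext; intro x
  rw [rho_pow_apply]
  simp [ZMod.natCast_self]

lemma orderOf_rho : orderOf (rho n) = n := by
  rw [orderOf_eq_iff (Nat.pos_of_ne_zero (NeZero.ne n))]
  refine ⟨rho_pow_n n, ?_⟩
  intro t ht ht0 h1
  have h2 : (((rho n) ^ t) 0) = ((1 : Equiv.Perm (ZMod n)) 0) := by rw [h1]
  rw [rho_pow_apply, zero_add] at h2
  have h3 : (t : ZMod n) = 0 := by simpa using h2
  rw [ZMod.natCast_eq_zero_iff] at h3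
  have := Nat.le_of_dvd ht0 h3
  omega

lemma commute_rho_pow_gcd (k : ℕ) (ν : Equiv.Perm (ZMod n)) :
    Commute ν ((rho n) ^ k) ↔ Commute ν ((rho n) ^ Nat.gcd k n) := by
  constructor
  · intro h
    have key : (rho n) ^ Nat.gcd k n
        = ((rho n) ^ k) ^ Nat.gcdA k n * ((rho n) ^ n) ^ Nat.gcdB k n := by
      rw [← zpow_natCast (rho n) (Nat.gcd k n), Nat.gcd_eq_gcd_ab, zpow_add, zpow_mul, zpow_mul,
        zpow_natCast, zpow_natCast]
    rw [key, rho_pow_n, one_zpow, mul_one]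
    exact h.zpow_right _
  · intro h
    obtain ⟨c, hc⟩ := Nat.gcd_dvd_left k n
    rw [hc, pow_mul]
    exact h.pow_right c

lemma isNCycle_def (ν : Equiv.Perm (ZMod n)) :
    IsNCycle ν ↔ (ν.IsCycle ∧ ν.support = Finset.univ) := Iff.rfl

lemma card_fix_k (hn : 2 ≤ n) (k : ℕ) :
    Nat.card {ν : Equiv.Perm (ZMod n) // IsNCycle ν ∧ Commute ν ((rho n) ^ k)} =
      (n / Nat.gcd k n).totient * (n / Nat.gcd k n) ^ (Nat.gcd k n - 1)
        * (Nat.gcd k n - 1).factorial := by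
  set g := Nat.gcd k n with hg
  have hgn : g ∣ n := Nat.gcd_dvd_right k n
  have hgpos : 0 < g := Nat.gcd_pos_of_pos_right k (Nat.pos_of_ne_zero (NeZero.ne n))
  have hmpos : 0 < n / g := Nat.div_pos (Nat.le_of_dvd (Nat.pos_of_ne_zero (NeZero.ne n)) hgn)
    hgpos
  haveI : NeZero g := ⟨hgpos.ne'⟩
  haveI : NeZero (n / g) := ⟨hmpos.ne'⟩
  have hdm : n = g * (n / g) := (Nat.mul_div_cancel' hgn).symm
  rw [← card_fix_zmod hdm]
  apply Nat.card_congr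
  apply Equiv.subtypeEquivRight
  intro ν
  rw [isNCycle_def, ncycle_iff_ptrans hn ν, ← rho_eq, commute_rho_pow_gcd n k ν, ← hg,
    and_comm]

/-- The rotation subgroup. -/
abbrev RH := Subgroup.zpowers (rho n)

/-- The set of `n`-cycles. -/
abbrev NC := {ν : Equiv.Perm (ZMod n) // IsNCycle ν}

lemma conj_isNCycle (σ : Equiv.Perm (ZMod n)) {ν : Equiv.Perm (ZMod n)} (h : IsNCycle ν) :
    IsNCycle (σ * ν * σ⁻¹) := by
  obtain ⟨h1, h2⟩ := h
  refine ⟨h1.conj, ?_⟩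
  rw [Equiv.Perm.support_conj, h2, Finset.map_univ_equiv]

instance : MulAction (RH n) (NC n) where
  smul h ν := ⟨h.1 * ν.1 * h.1⁻¹, conj_isNCycle n h.1 ν.2⟩
  one_smul ν := Subtype.ext (by
    show ((1 : RH n) : Equiv.Perm (ZMod n)) * ν.1 * (((1 : RH n) : Equiv.Perm (ZMod n)))⁻¹ = ν.1
    simp)
  mul_smul h g ν := Subtype.ext (by
    show (h * g).1 * ν.1 * ((h * g).1)⁻¹ = h.1 * (g.1 * ν.1 * g.1⁻¹) * (h.1)⁻¹
    rw [Subgroup.coe_mul, mul_inv_rev]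
    group)

lemma smul_def (h : RH n) (ν : NC n) : (h • ν).1 = h.1 * ν.1 * h.1⁻¹ := rfl

lemma rotOrbit_conj (z : ℤ) (ν : Equiv.Perm (ZMod n)) :
    rotOrbit ((rho n) ^ z * ν * ((rho n) ^ z)⁻¹) = rotOrbit ν := by
  ext σ
  simp only [rotOrbit, Set.mem_setOf_eq]
  have key : ∀ j : ℤ, (rho n) ^ j * ((rho n) ^ z * ν * ((rho n) ^ z)⁻¹) * ((rho n) ^ j)⁻¹
      = (rho n) ^ (j + z) * ν * ((rho n) ^ (j + z))⁻¹ := by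
    intro j
    rw [zpow_add]
    group
  constructor
  · rintro ⟨j, rfl⟩
    exact ⟨j + z, key j⟩
  · rintro ⟨j, rfl⟩
    refine ⟨j - z, ?_⟩
    rw [key (j - z), sub_add_cancel]

lemma mem_rotOrbit_self (ν : Equiv.Perm (ZMod n)) : ν ∈ rotOrbit ν :=
  ⟨0, by rw [zpow_zero, inv_one, mul_one, one_mul]⟩

noncomputable def orbitSetEquiv :
    Quotient (MulAction.orbitRel (RH n) (NC n)) ≃
      {S : Set (Equiv.Perm (ZMod n)) // ∃ ν, IsNCycle ν ∧ S = rotOrbit ν} := by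
  refine Equiv.ofBijective (Quotient.lift (fun ν : NC n =>
    (⟨rotOrbit ν.1, ⟨ν.1, ν.2, rfl⟩⟩ :
      {S : Set (Equiv.Perm (ZMod n)) // ∃ ν, IsNCycle ν ∧ S = rotOrbit ν})) ?_) ⟨?_, ?_⟩
  · intro ν μ hrel
    obtain ⟨h, hh⟩ := MulAction.mem_orbit_iff.1 hrel
    obtain ⟨z, hz⟩ := Subgroup.mem_zpowers_iff.1 h.2
    apply Subtype.ext
    show rotOrbit ν.1 = rotOrbit μ.1
    have hv : ν.1 = (rho n) ^ z * μ.1 * ((rho n) ^ z)⁻¹ := by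
      rw [hz]
      exact (congrArg Subtype.val hh).symm
    rw [hv, rotOrbit_conj]
  · intro a b
    induction a using Quotient.inductionOn with
    | h ν =>
    induction b using Quotient.inductionOn with
    | h μ =>
    intro hab
    have h1 : rotOrbit ν.1 = rotOrbit μ.1 := congrArg Subtype.val hab
    have h2 : ν.1 ∈ rotOrbit μ.1 := h1 ▸ mem_rotOrbit_self n ν.1
    obtain ⟨j, hj⟩ := h2
    apply Quotient.sound
    exact MulAction.mem_orbit_iff.2
      ⟨⟨(rho n) ^ j, Subgroup.mem_zpowers_iff.2 ⟨j, rfl⟩⟩, Subtype.ext hj.symm⟩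
  · rintro ⟨S, ν, hν, rfl⟩
    exact ⟨Quotient.mk _ ⟨ν, hν⟩, rfl⟩

noncomputable def rhEquiv : ZMod n ≃ RH n := by
  refine Equiv.ofBijective
    (fun k => ⟨(rho n) ^ k.val, Subgroup.mem_zpowers_iff.2 ⟨(k.val : ℤ), by rw [zpow_natCast]⟩⟩)
    ?_
  classical
  letI : Fintype (RH n) := Fintype.ofFinite _
  rw [Fintype.bijective_iff_injective_and_card]
  constructor
  · intro a b hab
    have h0 : (rho n) ^ a.val = (rho n) ^ b.val := congrArg Subtype.val hab
    have h1 : ((rho n) ^ a.val) 0 = ((rho n) ^ b.val) 0 := by rw [h0]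
    rw [rho_pow_apply, rho_pow_apply, zero_add, zero_add] at h1
    calc a = ((a.val : ℕ) : ZMod n) := (ZMod.natCast_rightInverse a).symm
    _ = ((b.val : ℕ) : ZMod n) := h1
    _ = b := ZMod.natCast_rightInverse b
  · rw [ZMod.card, ← Nat.card_eq_fintype_card, Nat.card_zpowers, orderOf_rho]

noncomputable def fixedByEquiv (k : ZMod n) :
    MulAction.fixedBy (NC n) (rhEquiv n k) ≃
      {ν : Equiv.Perm (ZMod n) // IsNCycle ν ∧ Commute ν ((rho n) ^ k.val)} where
  toFun x := ⟨x.1.1, x.1.2, by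
    have h1 : (rhEquiv n k).1 * x.1.1 * ((rhEquiv n k).1)⁻¹ = x.1.1 :=
      congrArg Subtype.val x.2
    have h2 : (rhEquiv n k).1 * x.1.1 = x.1.1 * (rhEquiv n k).1 :=
      (mul_inv_eq_iff_eq_mul.1 h1)
    exact (Commute.symm h2)⟩
  invFun ν := ⟨⟨ν.1, ν.2.1⟩, by
    show (rhEquiv n k) • (⟨ν.1, ν.2.1⟩ : NC n) = ⟨ν.1, ν.2.1⟩
    apply Subtype.ext
    rw [smul_def]
    rw [mul_inv_eq_iff_eq_mul]
    exact (ν.2.2.symm).eq⟩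
  left_inv x := Subtype.ext (Subtype.ext rfl)
  right_inv ν := Subtype.ext rfl

lemma burnside_step (hn : 2 ≤ n) :
    (∑ k : ZMod n,
      Nat.card {ν : Equiv.Perm (ZMod n) // IsNCycle ν ∧ Commute ν ((rho n) ^ k.val)})
      = T n * n := by
  classical
  letI : Fintype (RH n) := Fintype.ofFinite _
  letI : Fintype (NC n) := Fintype.ofFinite _
  letI : ∀ h : RH n, Fintype (MulAction.fixedBy (NC n) h) := fun h => Fintype.ofFinite _
  letI : Fintype (Quotient (MulAction.orbitRel (RH n) (NC n))) := Fintype.ofFinite _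
  have hb := MulAction.sum_card_fixedBy_eq_card_orbits_mul_card_group (RH n) (NC n)
  have hsum : ∑ k : ZMod n,
      Nat.card {ν : Equiv.Perm (ZMod n) // IsNCycle ν ∧ Commute ν ((rho n) ^ k.val)}
      = ∑ h : RH n, Fintype.card (MulAction.fixedBy (NC n) h) := by
    refine Fintype.sum_equiv (rhEquiv n) _ _ fun k => ?_
    rw [← Nat.card_eq_fintype_card, Nat.card_congr (fixedByEquiv n k)]
  rw [hsum, hb]
  have hT : Fintype.card (Quotient (MulAction.orbitRel (RH n) (NC n))) = T n := by
    rw [← Nat.card_eq_fintype_card, Nat.card_congr (orbitSetEquiv n)]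
    rfl
  have hH : Fintype.card (RH n) = n := by
    rw [← Nat.card_eq_fintype_card, Nat.card_zpowers, orderOf_rho]
  rw [hT, hH]

end Burnside

lemma count_gcd {n : ℕ} (hn0 : n ≠ 0) {d : ℕ} (hd : d ∣ n) (hdpos : 0 < d) :
    ((Finset.range n).filter (fun i => Nat.gcd i n = d)).card = Nat.totient (n / d) := by
  rw [Nat.totient_eq_card_coprime]
  apply Finset.card_nbij' (fun a => a / d) (fun b => d * b)
  · intro a ha
    rw [Finset.mem_coe, Finset.mem_filter, Finset.mem_range] at ha
    obtain ⟨ha1, ha2⟩ := ha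
    rw [Finset.mem_coe, Finset.mem_filter, Finset.mem_range]
    refine ⟨Nat.div_lt_div_of_lt_of_dvd hd ha1, ?_⟩
    have hc := Nat.coprime_div_gcd_div_gcd (m := a) (n := n) (by rw [ha2]; exact hdpos)
    rw [ha2] at hc
    exact hc.symm
  · intro b hb
    rw [Finset.mem_coe, Finset.mem_filter, Finset.mem_range] at hb
    obtain ⟨hb1, hb2⟩ := hb
    rw [Finset.mem_coe, Finset.mem_filter, Finset.mem_range]
    constructor
    · have h3 : d * b < d * (n / d) := (mul_lt_mul_iff_right₀ hdpos).2 hb1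
      rwa [Nat.mul_div_cancel' hd] at h3
    · conv_lhs => rw [show n = d * (n / d) from (Nat.mul_div_cancel' hd).symm]
      rw [Nat.gcd_mul_left, Nat.Coprime.gcd_eq_one hb2.symm, mul_one]
  · intro a ha
    rw [Finset.mem_coe, Finset.mem_filter] at ha
    exact Nat.mul_div_cancel' (ha.2 ▸ Nat.gcd_dvd_left a n)
  · intro b _
    exact Nat.mul_div_cancel_left b hdpos

end RotAux


theorem stmt_13 (n : ℕ) [NeZero n] (hn : 2 ≤ n) :
    n ^ 2 * T n =
      ∑ j ∈ n.divisors, (Nat.totient j) ^ 2 * j ^ (n / j) * (n / j).factorial := by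
  classical
  have hn0 : n ≠ 0 := NeZero.ne n
  set F : ℕ → ℕ := fun g => (n / g).totient * (n / g) ^ (g - 1) * (g - 1).factorial with hF
  have hb : ∑ k : ZMod n, F (Nat.gcd k.val n) = T n * n := by
    rw [← RotAux.burnside_step n hn]
    exact Finset.sum_congr rfl fun k _ => (RotAux.card_fix_k n hn k.val).symm
  have h2 : ∑ k : ZMod n, F (Nat.gcd k.val n) = ∑ i ∈ Finset.range n, F (Nat.gcd i n) := by
    rw [← Fin.sum_univ_eq_sum_range]
    refine (Fintype.sum_bijective (fun i : Fin n => ((i : ℕ) : ZMod n)) ?_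
      (fun i : Fin n => F (Nat.gcd (i : ℕ) n)) (fun k => F (Nat.gcd k.val n)) ?_).symm
    · rw [Fintype.bijective_iff_injective_and_card]
      refine ⟨?_, by simp [ZMod.card]⟩
      intro i j hij
      apply Fin.ext
      have h1 := congrArg ZMod.val hij
      rwa [ZMod.val_cast_of_lt i.2, ZMod.val_cast_of_lt j.2] at h1
    · intro i
      rw [ZMod.val_cast_of_lt i.2]
  have h3 : ∑ i ∈ Finset.range n, F (Nat.gcd i n)
      = ∑ d ∈ n.divisors, (n / d).totient * F d := by
    rw [← Finset.sum_fiberwise_of_maps_to (g := fun i => Nat.gcd i n) (t := n.divisors)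
      (fun i _ => Nat.mem_divisors.2 ⟨Nat.gcd_dvd_right i n, hn0⟩)]
    refine Finset.sum_congr rfl fun d hd => ?_
    have hdd := Nat.mem_divisors.1 hd
    have hdpos : 0 < d := Nat.pos_of_mem_divisors hd
    have hcongr : ∑ i ∈ (Finset.range n).filter (fun i => Nat.gcd i n = d),
        F (Nat.gcd i n) = ∑ i ∈ (Finset.range n).filter (fun i => Nat.gcd i n = d), F d :=
      Finset.sum_congr rfl fun i hi => by rw [(Finset.mem_filter.1 hi).2]
    rw [hcongr, Finset.sum_const, RotAux.count_gcd hn0 hdd.1 hdpos, smul_eq_mul]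
  have key : ∀ d ∈ n.divisors,
      n * ((n / d).totient * F d)
        = (fun j => (Nat.totient j) ^ 2 * j ^ (n / j) * (n / j).factorial) (n / d) := by
    intro d hd
    obtain ⟨hdvd, -⟩ := Nat.mem_divisors.1 hd
    have hdpos : 0 < d := Nat.pos_of_mem_divisors hd
    show n * ((n / d).totient * F d)
        = (Nat.totient (n / d)) ^ 2 * (n / d) ^ (n / (n / d)) * (n / (n / d)).factorial
    rw [Nat.div_div_self hdvd hn0]
    obtain ⟨e, rfl⟩ : ∃ e, d = e + 1 := ⟨d - 1, by omega⟩
    simp only [hF, Nat.add_sub_cancel]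
    set m := n / (e + 1) with hm
    have hnd : n = (e + 1) * m := (Nat.mul_div_cancel' hdvd).symm
    rw [pow_succ m e, Nat.factorial_succ]
    conv_lhs => rw [hnd]
    ring
  calc n ^ 2 * T n = n * (T n * n) := by ring
  _ = n * ∑ d ∈ n.divisors, (n / d).totient * F d := by rw [← h3, ← h2, hb]
  _ = ∑ d ∈ n.divisors, n * ((n / d).totient * F d) := Finset.mul_sum _ _ _
  _ = ∑ d ∈ n.divisors,
      (fun j => (Nat.totient j) ^ 2 * j ^ (n / j) * (n / j).factorial) (n / d) :=
    Finset.sum_congr rfl key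
  _ = ∑ j ∈ n.divisors, (Nat.totient j) ^ 2 * j ^ (n / j) * (n / j).factorial := by
    exact Nat.sum_div_divisors n (fun j => (Nat.totient j) ^ 2 * j ^ (n / j) * (n / j).factorial)
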